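/- Let k ≥ 2 and t ≥ 1 be integers, let h_1, ..., h_t be real polynomials of degree k with positive leading coefficients, let η > 0 and c > 1. With λ = 1 − 1/k and λ_j = λ^{j−1}, the number T of integer tuples (x_1,...,x_t,y_1,...,y_t) with P^{λ_j} < x_j, y_j ≤ cP^{λ_j} for all j and |Σ_{j≤t}(h_j(x_j) − h_j(y_j))| < η satisfies T ≪_{η,c,h} P^{λ_1 + ... + λ_t}. -/

import Mathlib

open Polynomial Finset

lemma evalAbsBound (k : ℕ) (p : Polynomial ℝ) (hdeg : p.natDegree ≤ k) (x : ℝ) (hx : 1 ≤ x) :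
    |p.eval x| ≤ (∑ i ∈ Finset.range (k+1), |p.coeff i|) * x ^ k := by
  have hx0 : (0:ℝ) ≤ x := le_trans zero_le_one hx
  have heval : p.eval x = ∑ i ∈ Finset.range (k+1), p.coeff i * x ^ i := by
    rw [Polynomial.eval_eq_sum_range]
    refine Finset.sum_subset ?_ ?_
    · exact Finset.range_subset_range.2 (by omega)
    · intro i _ hi
      have : p.natDegree < i := by
        simp only [Finset.mem_range, not_lt] at hi ⊢
        omega
      rw [Polynomial.coeff_eq_zero_of_natDegree_lt this, zero_mul]
  rw [heval, Finset.sum_mul]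
  refine (Finset.abs_sum_le_sum_abs _ _).trans (Finset.sum_le_sum fun i hi => ?_)
  rw [abs_mul, abs_pow, abs_of_nonneg hx0]
  refine mul_le_mul_of_nonneg_left ?_ (abs_nonneg _)
  exact pow_le_pow_right₀ hx (by simpa using Nat.lt_succ_iff.mp (Finset.mem_range.mp hi))

lemma derivLower (k : ℕ) (hk : 2 ≤ k) (p : Polynomial ℝ) (hdeg : p.natDegree = k)
    (hl : 0 < p.leadingCoeff) :
    ∃ c0 > 0, ∃ X : ℝ, 1 ≤ X ∧ ∀ x : ℝ, X ≤ x → c0 * x ^ (k-1) ≤ (Polynomial.derivative p).eval x := by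
  set q := Polynomial.derivative p with hq
  have hcoeff : q.coeff (k-1) = p.leadingCoeff * k := by
    rw [hq, Polynomial.coeff_derivative]
    have h1 : k - 1 + 1 = k := by omega
    rw [h1, ← hdeg, Polynomial.coeff_natDegree, hdeg]
    have h2 : ((k-1:ℕ):ℝ) = (k:ℝ) - 1 := by
      push_cast [Nat.cast_sub (by omega : 1 ≤ k)]; ring
    rw [h2]; ring
  have hcpos : 0 < q.coeff (k-1) := by
    rw [hcoeff]
    positivity
  have hqdeg : q.natDegree = k - 1 := by
    have hle : q.natDegree ≤ k - 1 := by
      have := Polynomial.natDegree_derivative_le p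
      rwa [hdeg] at this
    have hge : k - 1 ≤ q.natDegree := Polynomial.le_natDegree_of_ne_zero (ne_of_gt hcpos)
    omega
  have hqlead : q.leadingCoeff = p.leadingCoeff * k := by
    rw [Polynomial.leadingCoeff, hqdeg, hcoeff]
  have hqlpos : 0 < q.leadingCoeff := by rw [hqlead]; positivity
  have hequiv := Polynomial.isEquivalent_atTop_lead q
  rw [Asymptotics.IsEquivalent] at hequiv
  have hev := hequiv.def (by norm_num : (0:ℝ) < 1/2)
  rw [Filter.eventually_atTop] at hev
  obtain ⟨X0, hX0⟩ := hev
  refine ⟨q.leadingCoeff / 2, by positivity, max X0 1, le_max_right _ _, fun x hx => ?_⟩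
  have hx1 : (1:ℝ) ≤ x := le_trans (le_max_right _ _) hx
  have hx0 : (0:ℝ) ≤ x := zero_le_one.trans hx1
  have h := hX0 x (le_trans (le_max_left _ _) hx)
  simp only [Pi.sub_apply, norm_sub_rev] at h
  have hnorm : ‖q.leadingCoeff * x ^ q.natDegree - q.eval x‖ ≤ 1/2 * ‖q.leadingCoeff * x ^ q.natDegree‖ := by
    calc ‖q.leadingCoeff * x ^ q.natDegree - q.eval x‖
        = ‖q.eval x - q.leadingCoeff * x ^ q.natDegree‖ := (norm_sub_rev _ _)
      _ ≤ 1/2 * ‖q.leadingCoeff * x ^ q.natDegree‖ := h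
  have hgpos : 0 ≤ q.leadingCoeff * x ^ q.natDegree := by positivity
  rw [Real.norm_eq_abs, Real.norm_eq_abs, abs_of_nonneg hgpos] at hnorm
  have := abs_sub_abs_le_abs_sub (q.leadingCoeff * x ^ q.natDegree) (q.eval x)
  have h2 : q.leadingCoeff * x ^ q.natDegree - q.eval x ≤ 1/2 * (q.leadingCoeff * x ^ q.natDegree) :=
    (le_abs_self _).trans hnorm
  have : q.leadingCoeff / 2 * x ^ q.natDegree ≤ q.eval x := by nlinarith
  rwa [hqdeg] at this

lemma gapLemma (k : ℕ) (hk : 2 ≤ k) (p : Polynomial ℝ) (hdeg : p.natDegree = k)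
    (hl : 0 < p.leadingCoeff) :
    ∃ c0 > 0, ∃ X : ℝ, 1 ≤ X ∧ ∀ P : ℝ, X ≤ P → ∀ u v : ℝ, P < u → u < v →
      c0 * P ^ (k-1) * (v - u) ≤ p.eval v - p.eval u := by
  obtain ⟨c0, hc0, X, hX1, hX⟩ := derivLower k hk p hdeg hl
  refine ⟨c0, hc0, X, hX1, fun P hP u v hu huv => ?_⟩
  obtain ⟨ξ, hξ, hslope⟩ := exists_hasDerivAt_eq_slope (fun x => p.eval x)
    (fun x => (Polynomial.derivative p).eval x) huv
    (Polynomial.continuous p).continuousOn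
    (fun x _ => Polynomial.hasDerivAt p x)
  have hP0 : (0:ℝ) ≤ P := le_trans zero_le_one (hX1.trans hP)
  have hξP : P ≤ ξ := le_of_lt (hu.trans hξ.1)
  have hd : c0 * P ^ (k-1) ≤ (Polynomial.derivative p).eval ξ := by
    refine le_trans ?_ (hX ξ (hP.trans hξP))
    have := pow_le_pow_left₀ hP0 hξP (k-1)
    nlinarith
  have hvu0 : (0:ℝ) < v - u := by linarith
  have heq : p.eval v - p.eval u = (Polynomial.derivative p).eval ξ * (v - u) := by
    rw [eq_div_iff (ne_of_gt hvu0)] at hslope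
    linarith
  rw [heq]
  nlinarith

lemma cardGap (s : Finset ℤ) (L : ℝ) (hL : 0 ≤ L)
    (hgap : ∀ a ∈ s, ∀ b ∈ s, (b:ℝ) - (a:ℝ) ≤ L) : (s.card : ℝ) ≤ L + 1 := by
  rcases s.eq_empty_or_nonempty with rfl | hs
  · simp only [Finset.card_empty, Nat.cast_zero]; linarith
  · have hsub : s ⊆ Finset.Icc (s.min' hs) (s.min' hs + ⌊L⌋) := by
      intro b hb
      rw [Finset.mem_Icc]
      refine ⟨Finset.min'_le s b hb, ?_⟩
      have h1 : (b:ℝ) - (s.min' hs : ℝ) ≤ L := hgap _ (s.min'_mem hs) _ hb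
      have : (b - s.min' hs : ℤ) ≤ ⌊L⌋ := Int.le_floor.2 (by push_cast; linarith)
      omega
    have hcard := Finset.card_le_card hsub
    have h2 : (Finset.Icc (s.min' hs) (s.min' hs + ⌊L⌋)).card = (⌊L⌋ + 1).toNat := by
      rw [Int.card_Icc]; congr 1; ring
    have hfl : (0:ℤ) ≤ ⌊L⌋ := Int.floor_nonneg.2 hL
    have h4 : ((⌊L⌋ + 1).toNat : ℤ) = ⌊L⌋ + 1 := Int.toNat_of_nonneg (by omega)
    have h3 : (((⌊L⌋ + 1).toNat : ℕ) : ℝ) = ((⌊L⌋:ℝ) + 1) := by exact_mod_cast congrArg (Int.cast : ℤ → ℝ) h4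
    calc (s.card : ℝ) ≤ (((⌊L⌋ + 1).toNat : ℕ) : ℝ) := by exact_mod_cast (hcard.trans_eq h2)
      _ = (⌊L⌋:ℝ) + 1 := h3
      _ ≤ L + 1 := by linarith [Int.floor_le L]

open scoped Classical in
noncomputable def cnt (η c lam : ℝ) (t : ℕ) (h : Fin t → Polynomial ℝ) (P a : ℝ) :
    Finset ((Fin t → ℤ) × (Fin t → ℤ)) :=
  (Fintype.piFinset (fun j : Fin t => Finset.Ioc ⌊P ^ (lam ^ (j:ℕ))⌋ ⌊c * P ^ (lam ^ (j:ℕ))⌋) ×ˢ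
   Fintype.piFinset (fun j : Fin t => Finset.Ioc ⌊P ^ (lam ^ (j:ℕ))⌋ ⌊c * P ^ (lam ^ (j:ℕ))⌋)).filter
  (fun p => |a + ∑ j : Fin t, ((h j).eval ((p.1 j : ℤ) : ℝ) - (h j).eval ((p.2 j : ℤ) : ℝ))| < η)

lemma mem_cnt {η c lam : ℝ} {t : ℕ} {h : Fin t → Polynomial ℝ} {P a : ℝ}
    {p : (Fin t → ℤ) × (Fin t → ℤ)} :
    p ∈ cnt η c lam t h P a ↔
    (∀ j : Fin t, (P ^ (lam ^ (j:ℕ)) < ((p.1 j : ℤ):ℝ) ∧ ((p.1 j : ℤ):ℝ) ≤ c * P ^ (lam ^ (j:ℕ))) ∧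
      (P ^ (lam ^ (j:ℕ)) < ((p.2 j : ℤ):ℝ) ∧ ((p.2 j : ℤ):ℝ) ≤ c * P ^ (lam ^ (j:ℕ)))) ∧
    |a + ∑ j : Fin t, ((h j).eval ((p.1 j : ℤ):ℝ) - (h j).eval ((p.2 j : ℤ):ℝ))| < η := by
  unfold cnt
  rw [Finset.mem_filter, Finset.mem_product]
  simp only [Fintype.mem_piFinset, Finset.mem_Ioc, Int.floor_lt, Int.le_floor]
  constructor
  · rintro ⟨⟨h1, h2⟩, h3⟩; exact ⟨fun j => ⟨h1 j, h2 j⟩, h3⟩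
  · rintro ⟨h1, h2⟩; exact ⟨⟨fun j => (h1 j).1, fun j => (h1 j).2⟩, h2⟩

lemma key (k : ℕ) (hk : 2 ≤ k) (η c lam : ℝ) (hη : 0 < η) (hc : 1 < c)
    (hlam : lam = 1 - 1/(k:ℝ)) :
    ∀ t (h : Fin t → Polynomial ℝ), (∀ j, (h j).natDegree = k) → (∀ j, 0 < (h j).leadingCoeff) →
    ∃ C > 0, ∃ P₀ : ℝ, 1 ≤ P₀ ∧ ∀ P, P₀ ≤ P → ∀ a : ℝ,
      ((cnt η c lam t h P a).card : ℝ) ≤ C * P ^ (∑ j : Fin t, lam ^ (j:ℕ)) := by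
  have hk0 : (0:ℝ) < k := by positivity
  have hlam0 : 0 < lam := by
    rw [hlam]
    have : 1/(k:ℝ) ≤ 1/2 := by
      apply div_le_div_of_nonneg_left <;> norm_num
      exact_mod_cast hk
    linarith
  have hlam1 : lam ≤ 1 := by
    rw [hlam]
    have : 0 < 1/(k:ℝ) := by positivity
    linarith
  have hc0' : (0:ℝ) < c := by linarith
  intro t
  induction t with
  | zero =>
    intro h _ _
    refine ⟨1, one_pos, 1, le_refl 1, fun P hP a => ?_⟩
    have h1 : (cnt η c lam 0 h P a).card ≤ 1 :=
      Finset.card_le_one.2 (fun p _ q _ => Subsingleton.elim p q)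
    have h2 : (∑ j : Fin 0, lam ^ (j:ℕ)) = 0 := by simp
    rw [h2, Real.rpow_zero, mul_one]
    exact_mod_cast h1
  | succ t ih =>
    intro h hdeg hlead
    obtain ⟨C', hC', P₀', hP₀'1, HIH⟩ :=
      ih (fun i => h i.succ) (fun i => hdeg i.succ) (fun i => hlead i.succ)
    obtain ⟨c0, hc0, X, hX1, hgap⟩ := gapLemma k hk (h 0) (hdeg 0) (hlead 0)
    obtain ⟨A, hA⟩ : ∃ A : ℝ, A = (∑ j : Fin (t+1), ∑ i ∈ Finset.range (k+1), |(h j).coeff i|) + 1 := ⟨_, rfl⟩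
    have hApos : 0 < A := by
      have : (0:ℝ) ≤ ∑ j : Fin (t+1), ∑ i ∈ Finset.range (k+1), |(h j).coeff i| :=
        Finset.sum_nonneg fun j _ => Finset.sum_nonneg fun i _ => abs_nonneg _
      rw [hA]; linarith
    have hAbound : ∀ j : Fin (t+1), ∀ x : ℝ, 1 ≤ x → |(h j).eval x| ≤ A * x ^ k := by
      intro j x hx
      refine le_trans (evalAbsBound k (h j) (le_of_eq (hdeg j)) x hx) ?_
      have hxk : (0:ℝ) ≤ x ^ k := by positivity
      have hle : (∑ i ∈ Finset.range (k+1), |(h j).coeff i|) ≤ A := by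
        rw [hA]
        have := Finset.single_le_sum
          (f := fun j : Fin (t+1) => ∑ i ∈ Finset.range (k+1), |(h j).coeff i|)
          (fun j _ => Finset.sum_nonneg fun i _ => abs_nonneg _) (Finset.mem_univ j)
        linarith
      exact mul_le_mul_of_nonneg_right hle hxk
    obtain ⟨L, hLdef⟩ : ∃ L : ℝ, L = 2*η/c0 + 4*(t:ℝ)*A*c^k/c0 := ⟨_, rfl⟩
    have hL0 : 0 ≤ L := by
      rw [hLdef]; positivity
    obtain ⟨C, hCdef⟩ : ∃ C : ℝ, C = c * (L+1) * C' := ⟨_, rfl⟩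
    have hCpos : 0 < C := by rw [hCdef]; positivity
    refine ⟨C, hCpos, max (max X 1) (P₀' ^ (1/lam)), ?_, fun P hP a => ?_⟩
    · exact le_trans (le_trans (le_max_right X 1) (le_max_left _ _)) (le_refl _)
    -- main work
    have hP1 : (1:ℝ) ≤ P := le_trans (le_trans (le_max_right X 1) (le_max_left _ _)) hP
    have hP0 : (0:ℝ) < P := lt_of_lt_of_le one_pos hP1
    have hXP : X ≤ P := le_trans (le_trans (le_max_left X 1) (le_max_left _ _)) hP
    obtain ⟨Q, hQdef⟩ : ∃ Q : ℝ, Q = P ^ lam := ⟨_, rfl⟩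
    have hQ1 : (1:ℝ) ≤ Q := by
      rw [hQdef]
      calc (1:ℝ) = P ^ (0:ℝ) := (Real.rpow_zero P).symm
        _ ≤ P ^ lam := Real.rpow_le_rpow_of_exponent_le hP1 hlam0.le
    have hQP₀' : P₀' ≤ Q := by
      have h1 : P₀' ^ (1/lam) ≤ P := le_trans (le_max_right _ _) hP
      have h2 : (P₀' ^ (1/lam)) ^ lam ≤ P ^ lam :=
        Real.rpow_le_rpow (Real.rpow_nonneg (by linarith) _) h1 hlam0.le
      rw [← Real.rpow_mul (by linarith : (0:ℝ) ≤ P₀'), one_div_mul_cancel hlam0.ne',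
        Real.rpow_one] at h2
      rw [hQdef]
      exact h2
    obtain ⟨N, hNdef⟩ : ∃ N : ℝ, N = P ^ (k-1) := ⟨_, rfl⟩
    have hN1 : (1:ℝ) ≤ N := by rw [hNdef]; exact one_le_pow₀ hP1
    have hN0 : (0:ℝ) < N := lt_of_lt_of_le one_pos hN1
    have hlamk : lam * (k:ℝ) = (k:ℝ) - 1 := by
      rw [hlam]; field_simp
    have hQk : Q ^ k = N := by
      rw [hQdef, hNdef, ← Real.rpow_natCast (P ^ lam) k, ← Real.rpow_mul hP0.le, hlamk,
        ← Real.rpow_natCast P (k-1)]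
      congr 1
      push_cast [Nat.cast_sub (by omega : 1 ≤ k)]
      ring
    obtain ⟨M, hMdef⟩ : ∃ M : ℝ, M = (t:ℝ) * (2 * A * c^k * N) := ⟨_, rfl⟩
    have hM0 : 0 ≤ M := by rw [hMdef]; positivity
    -- bounds on coordinates
    have hQe : ∀ m : ℕ, P ^ (lam ^ (m+1)) = Q ^ (lam ^ m) := by
      intro m
      rw [pow_succ', Real.rpow_mul hP0.le, hQdef]
    have hone_le_rpow : ∀ m : ℕ, (1:ℝ) ≤ P ^ (lam ^ m) := by
      intro m
      calc (1:ℝ) = P ^ (0:ℝ) := (Real.rpow_zero P).symm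
        _ ≤ P ^ (lam ^ m) := Real.rpow_le_rpow_of_exponent_le hP1 (by positivity)
    have hrange_le : ∀ m : ℕ, 1 ≤ m → P ^ (lam ^ m) ≤ Q := by
      intro m hm
      rw [hQdef]
      refine Real.rpow_le_rpow_of_exponent_le hP1 ?_
      calc lam ^ m ≤ lam ^ 1 := pow_le_pow_of_le_one hlam0.le hlam1 hm
        _ = lam := pow_one lam
    -- term bound for tail coordinates
    have hterm : ∀ (m : ℕ), 1 ≤ m → ∀ x : ℤ, P ^ (lam ^ m) < (x:ℝ) → (x:ℝ) ≤ c * P ^ (lam ^ m) →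
        ∀ j : Fin (t+1), |(h j).eval (x:ℝ)| ≤ A * c^k * N := by
      intro m hm x hx1 hx2 j
      have hx1' : (1:ℝ) ≤ (x:ℝ) := le_trans (hone_le_rpow m) hx1.le
      refine le_trans (hAbound j (x:ℝ) hx1') ?_
      have hxc : (x:ℝ) ≤ c * Q := le_trans hx2
        (mul_le_mul_of_nonneg_left (hrange_le m hm) hc0'.le)
      have hx0 : (0:ℝ) ≤ (x:ℝ) := by linarith
      have h1 : (x:ℝ) ^ k ≤ (c * Q) ^ k := pow_le_pow_left₀ hx0 hxc k
      have h2 : (c * Q) ^ k = c ^ k * N := by rw [mul_pow, hQk]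
      calc A * (x:ℝ)^k ≤ A * ((c*Q)^k) := mul_le_mul_of_nonneg_left h1 hApos.le
        _ = A * c^k * N := by rw [h2]; ring
    -- tail sum bound
    have htailbound : ∀ p : (Fin (t+1) → ℤ) × (Fin (t+1) → ℤ), p ∈ cnt η c lam (t+1) h P a →
        |∑ i : Fin t, ((h i.succ).eval ((p.1 i.succ : ℤ):ℝ) - (h i.succ).eval ((p.2 i.succ : ℤ):ℝ))| ≤ M := by
      intro p hp
      obtain ⟨hrange, _⟩ := mem_cnt.1 hp
      refine le_trans (Finset.abs_sum_le_sum_abs _ _) ?_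
      rw [hMdef]
      have : ∀ i : Fin t,
          |(h i.succ).eval ((p.1 i.succ : ℤ):ℝ) - (h i.succ).eval ((p.2 i.succ : ℤ):ℝ)|
            ≤ 2 * A * c^k * N := by
        intro i
        have hsucc : ((i.succ : Fin (t+1)) : ℕ) = (i:ℕ) + 1 := Fin.val_succ i
        have h1 := (hrange i.succ).1
        have h2 := (hrange i.succ).2
        rw [hsucc] at h1 h2
        have hb1 := hterm ((i:ℕ)+1) (by omega) (p.1 i.succ) h1.1 h1.2 i.succ
        have hb2 := hterm ((i:ℕ)+1) (by omega) (p.2 i.succ) h2.1 h2.2 i.succ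
        calc |(h i.succ).eval ((p.1 i.succ : ℤ):ℝ) - (h i.succ).eval ((p.2 i.succ : ℤ):ℝ)|
            ≤ |(h i.succ).eval ((p.1 i.succ : ℤ):ℝ)| + |(h i.succ).eval ((p.2 i.succ : ℤ):ℝ)| :=
              abs_sub _ _
          _ ≤ 2 * A * c^k * N := by linarith
      calc ∑ i : Fin t, |(h i.succ).eval ((p.1 i.succ : ℤ):ℝ) - (h i.succ).eval ((p.2 i.succ : ℤ):ℝ)|
          ≤ ∑ _i : Fin t, (2 * A * c^k * N) := Finset.sum_le_sum (fun i _ => this i)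
        _ = (t:ℝ) * (2 * A * c^k * N) := by rw [Finset.sum_const]; simp [nsmul_eq_mul]
    -- box at index 0
    obtain ⟨B0, hB0def⟩ : ∃ B0 : Finset ℤ, B0 = Finset.Ioc ⌊P ^ (lam ^ (((0 : Fin (t+1))):ℕ))⌋
      ⌊c * P ^ (lam ^ (((0 : Fin (t+1))):ℕ))⌋ := ⟨_, rfl⟩
    have hP1eq : P ^ (lam ^ (((0 : Fin (t+1))):ℕ)) = P := by
      simp [Real.rpow_one]
    have hB0mem : ∀ x : ℤ, x ∈ B0 ↔ P < (x:ℝ) ∧ (x:ℝ) ≤ c * P := by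
      intro x
      rw [hB0def, Finset.mem_Ioc, Int.floor_lt, Int.le_floor, hP1eq]
    have hB0card : (B0.card : ℝ) ≤ c * P := by
      rw [hB0def, Int.card_Ioc]
      rcases le_or_gt (⌊c * P ^ (lam ^ (((0 : Fin (t+1))):ℕ))⌋ - ⌊P ^ (lam ^ (((0 : Fin (t+1))):ℕ))⌋) 0 with hle | hlt
      · rw [Int.toNat_of_nonpos hle]
        norm_num
        positivity
      · have h1 : ((⌊c * P ^ (lam ^ (((0 : Fin (t+1))):ℕ))⌋ - ⌊P ^ (lam ^ (((0 : Fin (t+1))):ℕ))⌋).toNat : ℤ)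
            = ⌊c * P ^ (lam ^ (((0 : Fin (t+1))):ℕ))⌋ - ⌊P ^ (lam ^ (((0 : Fin (t+1))):ℕ))⌋ :=
          Int.toNat_of_nonneg hlt.le
        have h2 : ((⌊c * P ^ (lam ^ (((0 : Fin (t+1))):ℕ))⌋ : ℝ) - (⌊P ^ (lam ^ (((0 : Fin (t+1))):ℕ))⌋ : ℝ)) ≤ c * P - (P - 1) := by
          have := Int.floor_le (c * P ^ (lam ^ (((0 : Fin (t+1))):ℕ)))
          have := Int.sub_one_lt_floor (P ^ (lam ^ (((0 : Fin (t+1))):ℕ)))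
          rw [hP1eq] at *
          linarith
      
        calc (((⌊c * P ^ (lam ^ (((0 : Fin (t+1))):ℕ))⌋ - ⌊P ^ (lam ^ (((0 : Fin (t+1))):ℕ))⌋).toNat : ℕ) : ℝ)
            = ((⌊c * P ^ (lam ^ (((0 : Fin (t+1))):ℕ))⌋ : ℝ) - (⌊P ^ (lam ^ (((0 : Fin (t+1))):ℕ))⌋ : ℝ)) := by
              exact_mod_cast congrArg (Int.cast : ℤ → ℝ) h1
          _ ≤ c * P - (P - 1) := h2
          _ ≤ c * P := by linarith
    -- the diagonal finset D
    classical
    obtain ⟨D, hDdef⟩ : ∃ D : Finset (ℤ × ℤ), D = (B0 ×ˢ B0).filter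
      (fun q => |a + ((h 0).eval ((q.1:ℤ):ℝ) - (h 0).eval ((q.2:ℤ):ℝ))| ≤ η + M) := ⟨_, rfl⟩
    -- Step A: project to D
    have hmapD : ∀ p ∈ cnt η c lam (t+1) h P a, (p.1 0, p.2 0) ∈ D := by
      intro p hp
      obtain ⟨hrange, hcond⟩ := mem_cnt.1 hp
      rw [hDdef, Finset.mem_filter, Finset.mem_product]
      refine ⟨⟨(hB0mem _).2 ?_, (hB0mem _).2 ?_⟩, ?_⟩
      · have := (hrange 0).1
        rw [hP1eq] at this
        exact this
      · have := (hrange 0).2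
        rw [hP1eq] at this
        exact this
      · have htail := htailbound p hp
        rw [Fin.sum_univ_succ] at hcond
        have habs := abs_lt.1 hcond
        have habs2 := abs_le.1 htail
        rw [abs_le]
        constructor <;> [skip; skip] <;> push_cast <;> push_cast at habs habs2 <;>
          [linarith [habs.1, habs2.2]; linarith [habs.2, habs2.1]]
    have hcardS : (cnt η c lam (t+1) h P a).card
        = ∑ q ∈ D, ((cnt η c lam (t+1) h P a).filter (fun p => (p.1 0, p.2 0) = q)).card :=
      Finset.card_eq_sum_card_fiberwise hmapD
    -- Step B: each fiber is bounded via IH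
    have hfiber : ∀ q ∈ D,
        (((cnt η c lam (t+1) h P a).filter (fun p => (p.1 0, p.2 0) = q)).card : ℝ)
          ≤ C' * Q ^ (∑ i : Fin t, lam ^ (i:ℕ)) := by
      intro q hq
      refine le_trans ?_ (HIH Q hQP₀' (a + ((h 0).eval ((q.1:ℤ):ℝ) - (h 0).eval ((q.2:ℤ):ℝ))))
      have hinj : ((cnt η c lam (t+1) h P a).filter (fun p => (p.1 0, p.2 0) = q)).card
          ≤ (cnt η c lam t (fun i => h i.succ) Q
              (a + ((h 0).eval ((q.1:ℤ):ℝ) - (h 0).eval ((q.2:ℤ):ℝ)))).card := by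
        refine Finset.card_le_card_of_injOn
          (fun p => ((fun i : Fin t => p.1 i.succ), (fun i : Fin t => p.2 i.succ))) ?_ ?_
        · intro p hp
          rw [Finset.mem_coe, Finset.mem_filter] at hp
          obtain ⟨hpS, hpq⟩ := hp
          obtain ⟨hrange, hcond⟩ := mem_cnt.1 hpS
          rw [Finset.mem_coe, mem_cnt]
          constructor
          · intro i
            have hsucc : ((i.succ : Fin (t+1)) : ℕ) = (i:ℕ) + 1 := Fin.val_succ i
            have h1 := hrange i.succ
            rw [hsucc, hQe (i:ℕ)] at h1
            exact h1
          · have hx0 : p.1 0 = q.1 := by rw [← hpq]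
            have hy0 : p.2 0 = q.2 := by rw [← hpq]
            rw [Fin.sum_univ_succ] at hcond
            rw [← hx0, ← hy0]
            have heq : a + ((h 0).eval ((p.1 0 : ℤ):ℝ) - (h 0).eval ((p.2 0:ℤ):ℝ))
                + ∑ i : Fin t, ((h i.succ).eval ((p.1 i.succ : ℤ):ℝ) - (h i.succ).eval ((p.2 i.succ:ℤ):ℝ))
                = a + (((h 0).eval ((p.1 0:ℤ):ℝ) - (h 0).eval ((p.2 0:ℤ):ℝ))
                  + ∑ i : Fin t, ((h i.succ).eval ((p.1 i.succ:ℤ):ℝ) - (h i.succ).eval ((p.2 i.succ:ℤ):ℝ))) := by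
              ring
            rw [heq]
            exact hcond
        · intro p hp p' hp' heq
          simp only [Finset.coe_filter, Set.mem_setOf_eq] at hp hp'
          have hx : (fun i : Fin t => p.1 i.succ) = (fun i : Fin t => p'.1 i.succ) :=
            congrArg Prod.fst heq
          have hy : (fun i : Fin t => p.2 i.succ) = (fun i : Fin t => p'.2 i.succ) :=
            congrArg Prod.snd heq
          have e1 : p.1 0 = q.1 := by rw [← hp.2]
          have e1' : p'.1 0 = q.1 := by rw [← hp'.2]
          have e2 : p.2 0 = q.2 := by rw [← hp.2]
          have e2' : p'.2 0 = q.2 := by rw [← hp'.2]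
          have hq1 : p.1 0 = p'.1 0 := by rw [e1, e1']
          have hq2 : p.2 0 = p'.2 0 := by rw [e2, e2']
          refine Prod.ext ?_ ?_
          · funext j
            refine Fin.cases ?_ ?_ j
            · exact hq1
            · intro i; exact congrFun hx i
          · funext j
            refine Fin.cases ?_ ?_ j
            · exact hq2
            · intro i; exact congrFun hy i
      exact_mod_cast hinj
    -- Step C: card of D
    have hDfiber : ∀ y ∈ B0, ((D.filter (fun q => q.2 = y)).card : ℝ) ≤ L + 1 := by
      intro y hy
      obtain ⟨s, hsdef⟩ : ∃ s : Finset ℤ, s = B0.filter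
        (fun x : ℤ => |a + ((h 0).eval ((x:ℤ):ℝ) - (h 0).eval ((y:ℤ):ℝ))| ≤ η + M) := ⟨_, rfl⟩
      have hinj : (D.filter (fun q => q.2 = y)).card ≤ s.card := by
        refine Finset.card_le_card_of_injOn Prod.fst ?_ ?_
        · intro r hr
          rw [Finset.mem_coe, Finset.mem_filter] at hr
          obtain ⟨hrD, hry⟩ := hr
          rw [hDdef, Finset.mem_filter, Finset.mem_product] at hrD
          rw [Finset.mem_coe, hsdef, Finset.mem_filter]
          refine ⟨hrD.1.1, ?_⟩
          rw [← hry]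
          exact hrD.2
        · intro r hr r' hr' hfst
          simp only [Finset.coe_filter, Set.mem_setOf_eq] at hr hr'
          exact Prod.ext hfst (hr.2.trans hr'.2.symm)
      have hgapS : ∀ x1 ∈ s, ∀ x2 ∈ s, (x2:ℝ) - (x1:ℝ) ≤ L := by
        intro x1 hx1 x2 hx2
        rw [hsdef, Finset.mem_filter] at hx1 hx2
        obtain ⟨hb1, habs1⟩ := hx1
        obtain ⟨hb2, habs2⟩ := hx2
        rcases lt_or_ge x1 x2 with hlt | hle
        · have hP1x : P < (x1:ℝ) := ((hB0mem x1).1 hb1).1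
          have hltR : (x1:ℝ) < (x2:ℝ) := by exact_mod_cast hlt
          have hg := hgap P hXP (x1:ℝ) (x2:ℝ) hP1x hltR
          have habs1' := abs_le.1 habs1
          have habs2' := abs_le.1 habs2
          have hdiff : (h 0).eval ((x2:ℤ):ℝ) - (h 0).eval ((x1:ℤ):ℝ) ≤ 2*(η+M) := by
            linarith [habs1'.1, habs2'.2]
          have hLc0 : L * c0 = 2*η + 4*(t:ℝ)*A*c^k := by
            rw [hLdef]; field_simp
          have hc0N : (0:ℝ) < c0 * N := mul_pos hc0 hN0
          have htA : (0:ℝ) ≤ (t:ℝ) * A * c^k :=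
            mul_nonneg (mul_nonneg (Nat.cast_nonneg t) hApos.le) (pow_nonneg hc0'.le k)
          have hgN : c0 * N * ((x2:ℝ) - (x1:ℝ)) ≤ (h 0).eval ((x2:ℤ):ℝ) - (h 0).eval ((x1:ℤ):ℝ) := by
            rw [hNdef]; exact hg
          have e1 : c0 * N * ((x2:ℝ) - (x1:ℝ)) ≤ 2*η + 4*(t:ℝ)*A*c^k*N := by
            calc c0 * N * ((x2:ℝ) - (x1:ℝ)) ≤ (h 0).eval ((x2:ℤ):ℝ) - (h 0).eval ((x1:ℤ):ℝ) := hgN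
              _ ≤ 2*(η+M) := hdiff
              _ = 2*η + 4*(t:ℝ)*A*c^k*N := by rw [hMdef]; ring
          have e2 : 2*η + 4*(t:ℝ)*A*c^k*N ≤ L * (c0 * N) := by
            have e2a : L * (c0 * N) = (2*η + 4*(t:ℝ)*A*c^k) * N := by
              calc L * (c0 * N) = (L * c0) * N := by ring
                _ = (2*η + 4*(t:ℝ)*A*c^k) * N := by rw [hLc0]
            have e2b : 2*η*1 ≤ 2*η*N := by
              apply mul_le_mul_of_nonneg_left hN1
              linarith
            have e2c : (2*η + 4*(t:ℝ)*A*c^k) * N = 2*η*N + 4*(t:ℝ)*A*c^k*N := by ring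
            rw [e2a, e2c]
            linarith
          have hmain : ((x2:ℝ) - (x1:ℝ)) * (c0 * N) ≤ L * (c0 * N) := by
            have e3 : ((x2:ℝ) - (x1:ℝ)) * (c0 * N) = c0 * N * ((x2:ℝ) - (x1:ℝ)) := by ring
            rw [e3]
            linarith
          exact le_of_mul_le_mul_right hmain hc0N
        · have : (x2:ℝ) ≤ (x1:ℝ) := by exact_mod_cast hle
          linarith
      calc ((D.filter (fun q => q.2 = y)).card : ℝ) ≤ (s.card : ℝ) := by exact_mod_cast hinj
        _ ≤ L + 1 := cardGap s L hL0 hgapS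
    have hDcard : (D.card : ℝ) ≤ (c*P) * (L+1) := by
      have hmap2 : ∀ q ∈ D, q.2 ∈ B0 := by
        intro q hq
        rw [hDdef, Finset.mem_filter, Finset.mem_product] at hq
        exact hq.1.2
      have h1 : D.card = ∑ y ∈ B0, (D.filter (fun q => q.2 = y)).card :=
        Finset.card_eq_sum_card_fiberwise hmap2
      calc (D.card : ℝ) = ∑ y ∈ B0, ((D.filter (fun q => q.2 = y)).card : ℝ) := by
            rw [h1]; push_cast; ring
        _ ≤ ∑ _y ∈ B0, (L+1) := Finset.sum_le_sum (fun y hy => hDfiber y hy)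
        _ = (B0.card : ℝ) * (L+1) := by rw [Finset.sum_const, nsmul_eq_mul]
        _ ≤ (c*P) * (L+1) := mul_le_mul_of_nonneg_right hB0card (by linarith)
    -- assembly
    have hPQ : P * Q ^ (∑ i : Fin t, lam ^ (i:ℕ)) = P ^ (∑ j : Fin (t+1), lam ^ ((j : Fin (t+1)):ℕ)) := by
      rw [Fin.sum_univ_succ]
      simp only [Fin.val_zero, pow_zero, Fin.val_succ]
      have hsum : (∑ i : Fin t, lam ^ ((i:ℕ)+1)) = lam * ∑ i : Fin t, lam ^ (i:ℕ) := by
        rw [Finset.mul_sum]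
        exact Finset.sum_congr rfl (fun i _ => pow_succ' lam (i:ℕ))
      rw [hsum, Real.rpow_add hP0, Real.rpow_one, Real.rpow_mul hP0.le, hQdef]
    have hQe'pos : (0:ℝ) ≤ C' * Q ^ (∑ i : Fin t, lam ^ (i:ℕ)) := by
      have : (0:ℝ) ≤ Q ^ (∑ i : Fin t, lam ^ (i:ℕ)) := Real.rpow_nonneg (by linarith) _
      nlinarith
    calc ((cnt η c lam (t+1) h P a).card : ℝ)
        = ∑ q ∈ D, (((cnt η c lam (t+1) h P a).filter (fun p => (p.1 0, p.2 0) = q)).card : ℝ) := by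
          rw [hcardS]; push_cast; ring
      _ ≤ ∑ _q ∈ D, (C' * Q ^ (∑ i : Fin t, lam ^ (i:ℕ))) := Finset.sum_le_sum hfiber
      _ = (D.card : ℝ) * (C' * Q ^ (∑ i : Fin t, lam ^ (i:ℕ))) := by
          rw [Finset.sum_const, nsmul_eq_mul]
      _ ≤ ((c*P)*(L+1)) * (C' * Q ^ (∑ i : Fin t, lam ^ (i:ℕ))) :=
          mul_le_mul_of_nonneg_right hDcard hQe'pos
      _ = C * (P * Q ^ (∑ i : Fin t, lam ^ (i:ℕ))) := by rw [hCdef]; ring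
      _ = C * P ^ (∑ j : Fin (t+1), lam ^ ((j : Fin (t+1)):ℕ)) := by rw [hPQ]

theorem stmt_12 (k t : ℕ) (hk : 2 ≤ k) (ht : 1 ≤ t)
    (h : Fin t → Polynomial ℝ)
    (hdeg : ∀ j, (h j).natDegree = k) (hlead : ∀ j, 0 < (h j).leadingCoeff)
    (η c : ℝ) (hη : 0 < η) (hc : 1 < c) (lam : ℝ) (hlam : lam = 1 - 1 / k) :
    ∃ C > 0, ∃ P₀ : ℝ, ∀ P : ℝ, P₀ ≤ P →
      (Set.ncard {p : (Fin t → ℤ) × (Fin t → ℤ) |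
        (∀ j : Fin t, (P ^ (lam ^ (j : ℕ)) < (p.1 j : ℝ) ∧ (p.1 j : ℝ) ≤ c * P ^ (lam ^ (j : ℕ))) ∧
          (P ^ (lam ^ (j : ℕ)) < (p.2 j : ℝ) ∧ (p.2 j : ℝ) ≤ c * P ^ (lam ^ (j : ℕ)))) ∧
        |∑ j : Fin t, ((h j).eval (p.1 j : ℝ) - (h j).eval (p.2 j : ℝ))| < η} : ℝ)
      ≤ C * P ^ (∑ j : Fin t, lam ^ (j : ℕ)) := by
  obtain ⟨C, hC, P₀, hP₀1, H⟩ := key k hk η c lam hη hc hlam t h hdeg hlead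
  refine ⟨C, hC, P₀, fun P hP => ?_⟩
  have hset : {p : (Fin t → ℤ) × (Fin t → ℤ) |
        (∀ j : Fin t, (P ^ (lam ^ (j : ℕ)) < (p.1 j : ℝ) ∧ (p.1 j : ℝ) ≤ c * P ^ (lam ^ (j : ℕ))) ∧
          (P ^ (lam ^ (j : ℕ)) < (p.2 j : ℝ) ∧ (p.2 j : ℝ) ≤ c * P ^ (lam ^ (j : ℕ)))) ∧
        |∑ j : Fin t, ((h j).eval (p.1 j : ℝ) - (h j).eval (p.2 j : ℝ))| < η}
      = ↑(cnt η c lam t h P 0) := by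
    ext p
    rw [Set.mem_setOf_eq, Finset.mem_coe, mem_cnt, zero_add]
  rw [hset, Set.ncard_coe_finset]
  exact H P hP 0
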